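/- Let ε > 0, let H be a symmetric n×n real matrix with ‖H‖ ≤ M, and set H̄ = H + 2εI. Let y_j, r_j, p_j be CG iterates for H̄ and g ≠ 0, well defined through index j (so p_iᵀ H̄ p_i > 0 and r_i ≠ 0 for all i ≤ j). Then q(y_{j+1}) ≤ q(y_j) − ‖r_j‖² / (2(M+2ε)). -/

import Mathlib

open RealInnerProductSpace

/-- Per-iteration decrease of the CG quadratic:
`q(y_{j+1}) ≤ q(y_j) − ‖r_j‖²/(2(M+2ε))`. -/
theorem stmt7
    {n : ℕ} (H : EuclideanSpace ℝ (Fin n) →L[ℝ] EuclideanSpace ℝ (Fin n))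
    (hsym : ∀ x y : EuclideanSpace ℝ (Fin n), ⟪H x, y⟫ = ⟪x, H y⟫)
    (ε M : ℝ) (hε : 0 < ε) (hM : ‖H‖ ≤ M)
    (Hb : EuclideanSpace ℝ (Fin n) →L[ℝ] EuclideanSpace ℝ (Fin n))
    (hHb : ∀ x : EuclideanSpace ℝ (Fin n), Hb x = H x + (2*ε) • x)
    (g : EuclideanSpace ℝ (Fin n)) (hg : g ≠ 0)
    (q : EuclideanSpace ℝ (Fin n) → ℝ)
    (hq : ∀ z, q z = 1/2 * ⟪z, Hb z⟫ + ⟪g, z⟫)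
    (j : ℕ)
    (y r p : ℕ → EuclideanSpace ℝ (Fin n)) (α : ℕ → ℝ)
    (hy0 : y 0 = 0) (hr0 : r 0 = g) (hp0 : p 0 = -g)
    (hα : ∀ i ≤ j, α i = ‖r i‖^2 / ⟪p i, Hb (p i)⟫)
    (hyrec : ∀ i ≤ j, y (i+1) = y i + α i • p i)
    (hrrec : ∀ i ≤ j, r (i+1) = r i + α i • Hb (p i))
    (hprec : ∀ i ≤ j, p (i+1) = -(r (i+1)) + (‖r (i+1)‖^2 / ‖r i‖^2) • p i)
    (hpcurv : ∀ i ≤ j, 0 < ⟪p i, Hb (p i)⟫)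
    (hrne : ∀ i ≤ j, r i ≠ 0) :
    q (y (j+1)) ≤ q (y j) - ‖r j‖^2 / (2 * (M + 2*ε)) := by
  have hM0 : (0:ℝ) ≤ M := le_trans (norm_nonneg _) hM
  have hMε : (0:ℝ) < M + 2*ε := by linarith
  have hbsym : ∀ x z : EuclideanSpace ℝ (Fin n), ⟪Hb x, z⟫ = ⟪x, Hb z⟫ := by
    intro x z
    rw [hHb x, hHb z, inner_add_left, inner_add_right, real_inner_smul_left,
      real_inner_smul_right, hsym]
  have hbnorm : ∀ x : EuclideanSpace ℝ (Fin n), ‖Hb x‖ ≤ (M + 2*ε) * ‖x‖ := by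
    intro x
    rw [hHb]
    have h1 : ‖H x‖ ≤ M * ‖x‖ :=
      le_trans (H.le_opNorm x) (mul_le_mul_of_nonneg_right hM (norm_nonneg x))
    have h2 : ‖(2*ε) • x‖ = (2*ε) * ‖x‖ := by
      rw [norm_smul, Real.norm_eq_abs, abs_of_pos (by linarith)]
    calc ‖H x + (2*ε) • x‖ ≤ ‖H x‖ + ‖(2*ε) • x‖ := norm_add_le _ _
      _ ≤ M * ‖x‖ + (2*ε) * ‖x‖ := by rw [h2]; linarith
      _ = (M + 2*ε) * ‖x‖ := by ring
  have hCS : ∀ x : EuclideanSpace ℝ (Fin n), ⟪x, Hb x⟫ ≤ (M+2*ε) * ‖x‖^2 := by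
    intro x
    calc ⟪x, Hb x⟫ ≤ ‖x‖ * ‖Hb x‖ := real_inner_le_norm _ _
      _ ≤ ‖x‖ * ((M+2*ε)*‖x‖) :=
          mul_le_mul_of_nonneg_left (hbnorm x) (norm_nonneg x)
      _ = (M+2*ε)*‖x‖^2 := by ring
  have hrpos : ∀ i, i ≤ j → (0:ℝ) < ‖r i‖^2 := fun i hi =>
    pow_pos (norm_pos_iff.mpr (hrne i hi)) 2
  have hαpos : ∀ i, i ≤ j → 0 < α i := fun i hi => by
    rw [hα i hi]; exact div_pos (hrpos i hi) (hpcurv i hi)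
  -- basic CG identities
  have rp : ∀ i, i ≤ j → ⟪r i, p i⟫ = -‖r i‖^2 ∧ ⟪r (i+1), p i⟫ = 0 := by
    intro i
    induction i with
    | zero =>
      intro hi
      have h1 : ⟪r 0, p 0⟫ = -‖r 0‖^2 := by
        rw [hr0, hp0, inner_neg_right, real_inner_self_eq_norm_sq]
      refine ⟨h1, ?_⟩
      have hne : ⟪p 0, Hb (p 0)⟫ ≠ 0 := (hpcurv 0 hi).ne'
      rw [hrrec 0 hi, inner_add_left, real_inner_smul_left, h1, hbsym, hα 0 hi,
        div_mul_cancel₀ _ hne]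
      ring
    | succ i ih =>
      intro hi
      have hij : i ≤ j := by omega
      obtain ⟨ih1, ih2⟩ := ih hij
      have h1 : ⟪r (i+1), p (i+1)⟫ = -‖r (i+1)‖^2 := by
        rw [hprec i hij, inner_add_right, inner_neg_right, real_inner_smul_right,
          real_inner_self_eq_norm_sq, ih2]
        ring
      refine ⟨h1, ?_⟩
      have hne : ⟪p (i+1), Hb (p (i+1))⟫ ≠ 0 := (hpcurv (i+1) hi).ne'
      rw [hrrec (i+1) hi, inner_add_left, real_inner_smul_left, h1, hbsym, hα (i+1) hi,
        div_mul_cancel₀ _ hne]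
      ring
  have hHbp : ∀ i, i ≤ j → Hb (p i) = (α i)⁻¹ • (r (i+1) - r i) := by
    intro i hi
    have hαne : α i ≠ 0 := (hαpos i hi).ne'
    rw [hrrec i hi]
    rw [add_sub_cancel_left, smul_smul, inv_mul_cancel₀ hαne, one_smul]
  have pconj : ∀ i, i ≤ j → ⟪p (i+1), Hb (p i)⟫ = ⟪r (i+1), r i⟫ / α i := by
    intro i hi
    have hαne : α i ≠ 0 := (hαpos i hi).ne'
    have hrne2 : (‖r i‖:ℝ)^2 ≠ 0 := (hrpos i hi).ne'
    have h3 : ⟪p i, r (i+1)⟫ = 0 := by rw [real_inner_comm]; exact (rp i hi).2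
    have h4 : ⟪p i, r i⟫ = -‖r i‖^2 := by rw [real_inner_comm]; exact (rp i hi).1
    rw [hprec i hi, hHbp i hi, inner_add_left, inner_neg_left,
      real_inner_smul_left, real_inner_smul_right, real_inner_smul_right,
      inner_sub_right, inner_sub_right, real_inner_self_eq_norm_sq, h3, h4, hα i hi]
    have hpne : ⟪p i, Hb (p i)⟫ ≠ 0 := (hpcurv i hi).ne'
    have hnrm : ‖r i‖ ≠ 0 := norm_ne_zero_iff.mpr (hrne i hi)
    field_simp [-PiLp.inner_apply]
    ring
  have rr : ∀ i, i ≤ j → ⟪r (i+1), r i⟫ = 0 := by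
    intro i
    induction i with
    | zero =>
      intro hi
      have h := (rp 0 hi).2
      have hg' : g = -(p 0) := by rw [hp0, neg_neg]
      rw [hr0, hg', inner_neg_right, h, neg_zero]
    | succ i ih =>
      intro hi
      have hij : i ≤ j := by omega
      have hri : r (i+1) = -(p (i+1)) + (‖r (i+1)‖^2/‖r i‖^2) • p i := by
        rw [hprec i hij]; module
      have h5 : ⟪r (i+1+1), p i⟫ = 0 := by
        rw [hrrec (i+1) hi, inner_add_left, (rp i hij).2, real_inner_smul_left,
          hbsym, pconj i hij, ih hij]
        simp
      rw [hri, inner_add_right, inner_neg_right, (rp (i+1) hi).2,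
        real_inner_smul_right, h5]
      ring
  -- bound on the curvature along p j
  have pbound : ⟪p j, Hb (p j)⟫ ≤ (M + 2*ε) * ‖r j‖^2 := by
    cases j with
    | zero =>
      have : ⟪p 0, Hb (p 0)⟫ = ⟪g, Hb g⟫ := by
        rw [hp0, map_neg, inner_neg_neg]
      rw [this, hr0]
      exact hCS g
    | succ k =>
      have hk : k ≤ k+1 := Nat.le_succ k
      have hαk : 0 < α k := hαpos k hk
      have hconj : ⟪p (k+1), Hb (p k)⟫ = 0 := by
        rw [pconj k hk, rr k hk, zero_div]
      have hrHbp : ⟪r (k+1), Hb (p k)⟫ = (α k)⁻¹ * ‖r (k+1)‖^2 := by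
        rw [hHbp k hk, real_inner_smul_right, inner_sub_right,
          real_inner_self_eq_norm_sq, rr k hk, sub_zero]
      have hβ : (0:ℝ) ≤ ‖r (k+1)‖^2 / ‖r k‖^2 := by positivity
      have hexp : ⟪p (k+1), Hb (p (k+1))⟫
          = ⟪r (k+1), Hb (r (k+1))⟫
            - (‖r (k+1)‖^2/‖r k‖^2) * ((α k)⁻¹ * ‖r (k+1)‖^2) := by
        have e1 : ⟪p (k+1), Hb (p (k+1))⟫ = -⟪r (k+1), Hb (p (k+1))⟫ := by
          calc ⟪p (k+1), Hb (p (k+1))⟫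
              = ⟪Hb (p (k+1)), p (k+1)⟫ := real_inner_comm _ _
            _ = ⟪Hb (p (k+1)), -(r (k+1)) + (‖r (k+1)‖^2/‖r k‖^2) • p k⟫ := by
                rw [← hprec k hk]
            _ = -⟪Hb (p (k+1)), r (k+1)⟫
                + (‖r (k+1)‖^2/‖r k‖^2) * ⟪Hb (p (k+1)), p k⟫ := by
                rw [inner_add_right, inner_neg_right, real_inner_smul_right]
            _ = -⟪r (k+1), Hb (p (k+1))⟫ := by
                have : ⟪Hb (p (k+1)), p k⟫ = 0 := by
                  rw [real_inner_comm, ← hbsym, real_inner_comm]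
                  exact hconj
                rw [this, real_inner_comm]
                ring
        rw [e1, hprec k hk, map_add, map_neg, map_smul, inner_add_right,
          inner_neg_right, real_inner_smul_right, hrHbp]
        ring
      have hHbr : ⟪r (k+1), Hb (r (k+1))⟫ ≤ (M+2*ε) * ‖r (k+1)‖^2 := hCS _
      have hnn : (0:ℝ) ≤ (‖r (k+1)‖^2/‖r k‖^2) * ((α k)⁻¹ * ‖r (k+1)‖^2) := by
        have := (hrpos (k+1) le_rfl)
        positivity
      linarith [hexp, hHbr, hnn]
  -- residual invariant
  have rinv : ∀ i, i ≤ j → r i = Hb (y i) + g := by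
    intro i
    induction i with
    | zero => intro _; rw [hr0, hy0, map_zero, zero_add]
    | succ i ih =>
      intro hi
      have hij : i ≤ j := by omega
      rw [hrrec i hij, ih hij, hyrec i hij, map_add, map_smul]
      module
  -- decrease identity
  have hz : Hb (y j + α j • p j) = Hb (y j) + α j • Hb (p j) := by
    rw [map_add, map_smul]
  have hsw : ⟪y j, Hb (p j)⟫ = ⟪p j, Hb (y j)⟫ := by
    rw [← hbsym, real_inner_comm]
  have hpr : ⟪p j, Hb (y j)⟫ + ⟪g, p j⟫ = -‖r j‖^2 := by
    have h1 : ⟪p j, Hb (y j) + g⟫ = -‖r j‖^2 := by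
      rw [← rinv j le_rfl, real_inner_comm]; exact (rp j le_rfl).1
    rw [inner_add_right] at h1
    have h2 : ⟪g, p j⟫ = ⟪p j, g⟫ := real_inner_comm _ _
    linarith
  have expand : q (y (j+1)) = q (y j) + α j * (⟪p j, Hb (y j)⟫ + ⟪g, p j⟫)
      + α j^2/2 * ⟪p j, Hb (p j)⟫ := by
    rw [hq, hq, hyrec j le_rfl, hz]
    simp only [inner_add_left, inner_add_right, real_inner_smul_left,
      real_inner_smul_right, hsw]
    ring
  have hc : (0:ℝ) < ⟪p j, Hb (p j)⟫ := hpcurv j le_rfl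
  have hrj : (0:ℝ) < ‖r j‖^2 := hrpos j le_rfl
  rw [expand, hpr, hα j le_rfl]
  have hfingen : ∀ c R : ℝ, c ≠ 0 → R / c * (-R) + (R/c)^2/2*c = -(R^2/(2*c)) := by
    intro c R hcne
    field_simp
    ring
  have hfin := hfingen (⟪p j, Hb (p j)⟫) (‖r j‖^2) hc.ne'
  have hgen : ∀ c R K : ℝ, 0 < c → 0 < R → 0 < K → c ≤ K * R → R/(2*K) ≤ R^2/(2*c) := by
    intro c R K hc0 hR hK hle
    rw [div_le_div_iff₀ (by positivity) (by positivity)]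
    nlinarith
  have hineq : ‖r j‖^2/(2*(M+2*ε)) ≤ (‖r j‖^2)^2/(2*⟪p j, Hb (p j)⟫) :=
    hgen _ _ _ hc hrj hMε pbound
  linarith [hfin, hineq]
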